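/- Let i, j, i', j' be four pairwise distinct fixed vertices (so {i,j} ∩ {i',j'} = ∅) and let G = G(n,1/2). Then π n · P(w_1^G(i) = w_1^G(j) and w_1^G(i') = w_1^G(j')) → 1 as n → ∞; that is, this probability equals (1 + o(1))/(π n). -/

import Mathlib

open Filter

/-- `walkCount G k x` is the number of walks of length `k` in `G` starting at `x`. -/
noncomputable def walkCount {V : Type*} (G : SimpleGraph V) (k : ℕ) (x : V) : ℕ :=
  Nat.card {p : (y : V) × G.Walk x y // p.2.length = k}

/-- `Pr n P` is the probability that a uniformly random simple graph on `Fin n`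
satisfies the property `P`. -/
noncomputable def Pr (n : ℕ) (P : SimpleGraph (Fin n) → Prop) : ℝ :=
  (Nat.card {G : SimpleGraph (Fin n) // P G} : ℝ) / (Nat.card (SimpleGraph (Fin n)) : ℝ)

namespace ProbAux
noncomputable def walkOneEquiv {V : Type*} (G : SimpleGraph V) (x : V) :
    {p : (y : V) × G.Walk x y // p.2.length = 1} ≃ {y : V // G.Adj x y} where
  toFun p := ⟨p.1.1, SimpleGraph.Walk.adj_of_length_eq_one p.2⟩
  invFun y := ⟨⟨y.1, .cons y.2 .nil⟩, rfl⟩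
  left_inv := by
    rintro ⟨⟨y, p⟩, hp⟩
    cases p with
    | nil => simp at hp
    | cons h q =>
      simp only [SimpleGraph.Walk.length_cons, Nat.add_eq_right] at hp
      obtain rfl := SimpleGraph.Walk.eq_of_length_eq_zero hp
      rw [SimpleGraph.Walk.length_eq_zero_iff, SimpleGraph.Walk.nil_iff_eq_nil] at hp
      subst hp
      rfl
  right_inv y := rfl

/-- Peel the last vertex off a simple graph on `Fin (k+1)`. -/
noncomputable def split (k : ℕ) :
    SimpleGraph (Fin (k + 1)) ≃ (Fin k → Bool) × SimpleGraph (Fin k) where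
  toFun G := by
    classical
    exact (fun w => decide (G.Adj (Fin.last k) w.castSucc), G.comap Fin.castSucc)
  invFun p :=
    { Adj := fun x y =>
        (x = Fin.last k ∧ ∃ h : y ≠ Fin.last k, p.1 (y.castPred h) = true) ∨
        (y = Fin.last k ∧ ∃ h : x ≠ Fin.last k, p.1 (x.castPred h) = true) ∨
        (∃ (hx : x ≠ Fin.last k) (hy : y ≠ Fin.last k),
          p.2.Adj (x.castPred hx) (y.castPred hy))
      symm := by
        constructor
        rintro x y (⟨rfl, h⟩ | ⟨rfl, h⟩ | ⟨hx, hy, h⟩)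
        · exact Or.inr (Or.inl ⟨rfl, h⟩)
        · exact Or.inl ⟨rfl, h⟩
        · exact Or.inr (Or.inr ⟨hy, hx, h.symm⟩)
      loopless := by
        constructor
        rintro x (⟨rfl, h, _⟩ | ⟨rfl, h, _⟩ | ⟨hx, hy, h⟩)
        · exact h rfl
        · exact h rfl
        · exact p.2.irrefl h }
  left_inv G := by
    classical
    ext x y
    simp only [SimpleGraph.comap_adj, decide_eq_true_eq]
    constructor
    · rintro (⟨rfl, h, hadj⟩ | ⟨rfl, h, hadj⟩ | ⟨hx, hy, hadj⟩)
      · simpa using hadj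
      · rw [Fin.castSucc_castPred] at hadj
        exact hadj.symm
      · simpa using hadj
    · intro h
      by_cases hx : x = Fin.last k <;> by_cases hy : y = Fin.last k
      · subst hx; subst hy; exact absurd h G.irrefl
      · subst hx; exact Or.inl ⟨rfl, hy, by simpa using h⟩
      · subst hy; exact Or.inr (Or.inl ⟨rfl, hx, by simpa using h.symm⟩)
      · exact Or.inr (Or.inr ⟨hx, hy, by simpa using h⟩)
  right_inv p := by
    classical
    obtain ⟨f, H⟩ := p
    refine Prod.ext ?_ ?_
    · funext w
      have hne : w.castSucc ≠ Fin.last k := (Fin.castSucc_lt_last w).ne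
      simp [hne, Fin.castPred_castSucc]
    · ext a b
      have ha : a.castSucc ≠ Fin.last k := (Fin.castSucc_lt_last a).ne
      have hb : b.castSucc ≠ Fin.last k := (Fin.castSucc_lt_last b).ne
      simp [ha, hb, Fin.castPred_castSucc]

noncomputable def cnt {α : Type*} [Fintype α] (f : α → Bool) : ℕ :=
  Nat.card {x : α // f x = true}

open scoped Classical in
lemma cnt_eq_card_filter {α : Type*} [Fintype α] (f : α → Bool) :
    cnt f = (Finset.univ.filter (fun x => f x = true)).card := by
  rw [cnt, Nat.card_eq_fintype_card, Fintype.card_subtype]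

lemma cnt_le {α : Type*} [Fintype α] (f : α → Bool) : cnt f ≤ Fintype.card α := by
  rw [cnt, Nat.card_eq_fintype_card]
  exact Fintype.card_subtype_le _

lemma cnt_compl {α : Type*} [Fintype α] (f : α → Bool) :
    cnt (fun x => !(f x)) = Fintype.card α - cnt f := by
  classical
  rw [cnt, cnt, Nat.card_eq_fintype_card, Nat.card_eq_fintype_card]
  have h : ∀ x, ((!f x) = true) ↔ ¬(f x = true) := by intro x; simp
  rw [Fintype.card_congr (Equiv.subtypeEquivRight h)]
  exact Fintype.card_subtype_compl _

/-- complementing each value of a boolean function -/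
def complEquiv (α : Type*) : (α → Bool) ≃ (α → Bool) where
  toFun f x := !(f x)
  invFun f x := !(f x)
  left_inv f := by funext x; simp
  right_inv f := by funext x; simp

def sumSubtypeEquiv {α β : Type*} (p : α ⊕ β → Prop) :
    {x : α ⊕ β // p x} ≃ {a : α // p (Sum.inl a)} ⊕ {b : β // p (Sum.inr b)} where
  toFun x := match x with
    | ⟨.inl a, h⟩ => .inl ⟨a, h⟩
    | ⟨.inr b, h⟩ => .inr ⟨b, h⟩
  invFun y := match y with
    | .inl ⟨a, h⟩ => ⟨.inl a, h⟩
    | .inr ⟨b, h⟩ => ⟨.inr b, h⟩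
  left_inv x := by rcases x with ⟨a | b, h⟩ <;> rfl
  right_inv y := by rcases y with ⟨a, h⟩ | ⟨b, h⟩ <;> rfl

lemma cnt_sum {α β : Type*} [Fintype α] [Fintype β] (f : α ⊕ β → Bool) :
    cnt f = cnt (f ∘ Sum.inl) + cnt (f ∘ Sum.inr) := by
  rw [cnt, Nat.card_congr (sumSubtypeEquiv (fun x => f x = true)), Nat.card_sum]
  rfl

/-- boolean functions as finsets -/
def funFinsetEquiv (α : Type*) [Fintype α] [DecidableEq α] : (α → Bool) ≃ Finset α where
  toFun f := Finset.univ.filter (fun x => f x = true)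
  invFun s x := decide (x ∈ s)
  left_inv f := by funext x; simp
  right_inv s := by ext x; simp

lemma card_cnt_eq {α : Type*} [Fintype α] [DecidableEq α] (t : ℕ) :
    Nat.card {f : α → Bool // cnt f = t} = (Fintype.card α).choose t := by
  have e : {f : α → Bool // cnt f = t} ≃ {s : Finset α // s.card = t} := by
    refine (funFinsetEquiv α).subtypeEquiv (fun f => ?_)
    rw [cnt_eq_card_filter]
    rfl
  rw [Nat.card_congr e, Nat.card_eq_fintype_card, Fintype.card_finset_len]

lemma card_pairfun (m u v : ℕ) (hu : u ≤ m) :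
    Nat.card {g : (Fin m → Bool) × (Fin m → Bool) // u + cnt g.1 = v + cnt g.2} =
      (2 * m).choose (m + v - u) := by
  have e1 : {g : (Fin m → Bool) × (Fin m → Bool) // u + cnt g.1 = v + cnt g.2} ≃
      {g : (Fin m → Bool) × (Fin m → Bool) // cnt g.1 + cnt g.2 = m + v - u} := by
    refine ((Equiv.refl (Fin m → Bool)).prodCongr (complEquiv (Fin m))).subtypeEquiv
      (fun g => ?_)
    have hc2 : cnt (fun x => !(g.2 x)) = m - cnt g.2 := by
      simpa using cnt_compl g.2
    have hle1 : cnt g.1 ≤ m := by simpa using cnt_le g.1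
    have hle2 : cnt g.2 ≤ m := by simpa using cnt_le g.2
    show _ ↔ cnt g.1 + cnt (fun x => !(g.2 x)) = m + v - u
    rw [hc2]
    omega
  have e2 : {h : Fin m ⊕ Fin m → Bool // cnt h = m + v - u} ≃
      {g : (Fin m → Bool) × (Fin m → Bool) // cnt g.1 + cnt g.2 = m + v - u} := by
    refine (Equiv.sumArrowEquivProdArrow (Fin m) (Fin m) Bool).subtypeEquiv (fun h => ?_)
    rw [cnt_sum h]
    rfl
  rw [Nat.card_congr (e1.trans e2.symm), card_cnt_eq, Fintype.card_sum, Fintype.card_fin]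
  ring_nf

noncomputable def degN {V : Type*} (G : SimpleGraph V) (x : V) : ℕ :=
  Nat.card {y : V // G.Adj x y}

open scoped Classical in
lemma card_fin_succ_subtype {k : ℕ} (P : Fin (k + 1) → Prop) :
    Nat.card {y : Fin (k + 1) // P y} =
      (if P (Fin.last k) then 1 else 0) + Nat.card {w : Fin k // P w.castSucc} := by
  rw [Nat.card_eq_fintype_card, Nat.card_eq_fintype_card, Fintype.card_subtype,
    Fintype.card_subtype, Finset.card_filter, Finset.card_filter, Fin.sum_univ_castSucc]
  exact add_comm _ _

lemma cnt_split {k : ℕ} (f : Fin (k + 1) → Bool) :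
    cnt f = (f (Fin.last k)).toNat + cnt (f ∘ Fin.castSucc) := by
  rw [cnt, card_fin_succ_subtype (fun w => f w = true)]
  congr 1
  cases f (Fin.last k) <;> simp

lemma split_symm_adj {k : ℕ} (p : (Fin k → Bool) × SimpleGraph (Fin k)) (x y : Fin (k + 1)) :
    ((split k).symm p).Adj x y ↔
      ((x = Fin.last k ∧ ∃ h : y ≠ Fin.last k, p.1 (y.castPred h) = true) ∨
       (y = Fin.last k ∧ ∃ h : x ≠ Fin.last k, p.1 (x.castPred h) = true) ∨
       (∃ (hx : x ≠ Fin.last k) (hy : y ≠ Fin.last k),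
          p.2.Adj (x.castPred hx) (y.castPred hy))) := Iff.rfl

lemma degN_split_symm_last {k : ℕ} (p : (Fin k → Bool) × SimpleGraph (Fin k)) :
    degN ((split k).symm p) (Fin.last k) = cnt p.1 := by
  rw [degN, card_fin_succ_subtype]
  rw [if_neg ((split k).symm p).irrefl]
  rw [cnt]
  have : ∀ w : Fin k, ((split k).symm p).Adj (Fin.last k) w.castSucc ↔ p.1 w = true := by
    intro w
    have hne : w.castSucc ≠ Fin.last k := (Fin.castSucc_lt_last w).ne
    rw [split_symm_adj]
    simp [hne, Fin.castPred_castSucc]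
  rw [Nat.card_congr (Equiv.subtypeEquivRight this), Nat.zero_add]

lemma degN_split_symm_castSucc {k : ℕ} (p : (Fin k → Bool) × SimpleGraph (Fin k)) (w : Fin k) :
    degN ((split k).symm p) w.castSucc = (p.1 w).toNat + degN p.2 w := by
  rw [degN, card_fin_succ_subtype]
  have hne : w.castSucc ≠ Fin.last k := (Fin.castSucc_lt_last w).ne
  congr 1
  · rw [split_symm_adj]
    simp only [hne, Fin.castPred_castSucc]
    rcases Bool.eq_false_or_eq_true (p.1 w) with h | h <;> simp [h, hne]
  · rw [degN]
    refine Nat.card_congr (Equiv.subtypeEquivRight ?_)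
    intro u
    have hu : u.castSucc ≠ Fin.last k := (Fin.castSucc_lt_last u).ne
    rw [split_symm_adj]
    simp [hne, hu, Fin.castPred_castSucc]


lemma walkCount_one {V : Type*} (G : SimpleGraph V) (x : V) :
    walkCount G 1 x = degN G x :=
  Nat.card_congr (walkOneEquiv G x)

lemma card_prod_left {α β : Type*} (R : α → Prop) :
    Nat.card {x : α × β // R x.1} = Nat.card {a : α // R a} * Nat.card β := by
  rw [← Nat.card_prod]
  exact Nat.card_congr ⟨fun x => (⟨x.1.1, x.2⟩, x.1.2), fun y => ⟨(y.1.1, y.2), y.1.2⟩,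
    fun x => rfl, fun y => rfl⟩

open scoped Classical in
lemma card_prod_sum {α β : Type*} [Fintype α] [Fintype β] (W : α × β → Prop) :
    Nat.card {x : α × β // W x} = ∑ a : α, Nat.card {b : β // W (a, b)} := by
  have e : {x : α × β // W x} ≃ (a : α) × {b : β // W (a, b)} :=
    ⟨fun y => ⟨y.1.1, ⟨y.1.2, y.2⟩⟩, fun s => ⟨(s.1, s.2.1), s.2.2⟩,
      fun y => rfl, fun s => rfl⟩
  rw [Nat.card_congr e, Nat.card_eq_fintype_card, Fintype.card_sigma]
  simp [Nat.card_eq_fintype_card]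

lemma card_and_prod {α β : Type*} (R1 : α → Prop) (R2 : β → Prop) :
    Nat.card {x : α × β // R1 x.1 ∧ R2 x.2} = Nat.card {a // R1 a} * Nat.card {b // R2 b} := by
  rw [Nat.card_congr (Equiv.subtypeProdEquivProd (p := R1) (q := R2)), Nat.card_prod]


abbrev D (m : ℕ) := (Fin (m+3) → Bool) × (Fin (m+2) → Bool) × (Fin (m+1) → Bool) ×
  (Fin m → Bool) × SimpleGraph (Fin m)

noncomputable def Psi (m : ℕ) : SimpleGraph (Fin (m+4)) ≃ D m :=
  (split (m+3)).trans <| (Equiv.refl _).prodCongr <| (split (m+2)).trans <|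
    (Equiv.refl _).prodCongr <| (split (m+1)).trans <| (Equiv.refl _).prodCongr (split m)

lemma Psi_symm_apply (m : ℕ) (d : D m) :
    (Psi m).symm d = (split (m+3)).symm (d.1, (split (m+2)).symm (d.2.1,
      (split (m+1)).symm (d.2.2.1, (split m).symm (d.2.2.2.1, d.2.2.2.2)))) := rfl

def va (m : ℕ) : Fin (m+4) := Fin.last (m+3)
def vb (m : ℕ) : Fin (m+4) := (Fin.last (m+2)).castSucc
def vc (m : ℕ) : Fin (m+4) := (Fin.last (m+1)).castSucc.castSucc
def vd (m : ℕ) : Fin (m+4) := (Fin.last m).castSucc.castSucc.castSucc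

lemma degN_va (m : ℕ) (d : D m) : degN ((Psi m).symm d) (va m) = cnt d.1 := by
  rw [Psi_symm_apply, va, degN_split_symm_last]

lemma degN_vb (m : ℕ) (d : D m) :
    degN ((Psi m).symm d) (vb m) = (d.1 (Fin.last (m+2))).toNat + cnt d.2.1 := by
  rw [Psi_symm_apply, vb, degN_split_symm_castSucc, degN_split_symm_last]

lemma degN_vc (m : ℕ) (d : D m) :
    degN ((Psi m).symm d) (vc m) = (d.1 (Fin.last (m+1)).castSucc).toNat +
      ((d.2.1 (Fin.last (m+1))).toNat + cnt d.2.2.1) := by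
  rw [Psi_symm_apply, vc, degN_split_symm_castSucc, degN_split_symm_castSucc,
    degN_split_symm_last]

lemma degN_vd (m : ℕ) (d : D m) :
    degN ((Psi m).symm d) (vd m) = (d.1 (Fin.last m).castSucc.castSucc).toNat +
      ((d.2.1 (Fin.last m).castSucc).toNat + ((d.2.2.1 (Fin.last m)).toNat + cnt d.2.2.2.1)) := by
  rw [Psi_symm_apply, vd, degN_split_symm_castSucc, degN_split_symm_castSucc,
    degN_split_symm_castSucc, degN_split_symm_last]

def fsplit (k : ℕ) : (Fin (k+1) → Bool) ≃ (Fin k → Bool) × Bool where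
  toFun f := (f ∘ Fin.castSucc, f (Fin.last k))
  invFun p := Fin.snoc p.1 p.2
  left_inv f := by
    funext x
    induction x using Fin.lastCases with
    | last => simp
    | cast w => simp
  right_inv p := by
    refine Prod.ext (funext fun w => ?_) ?_
    · simp
    · simp

lemma cnt_snoc {k : ℕ} (g : Fin k → Bool) (b : Bool) :
    cnt (Fin.snoc g b : Fin (k+1) → Bool) = b.toNat + cnt g := by
  rw [cnt_split]
  congr 1
  · simp
  · congr 1
    funext w
    simp

abbrev DD (m : ℕ) := (Bool × Bool × Bool × Bool) ×
  (((Fin m → Bool) × (Fin m → Bool)) × ((Fin m → Bool) × (Fin m → Bool))) ×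
  (Bool × Bool × SimpleGraph (Fin m))

def E1 (m : ℕ) : (Fin (m+3) → Bool) ≃ (((Fin m → Bool) × Bool) × Bool) × Bool :=
  (fsplit (m+2)).trans <| ((fsplit (m+1)).trans <|
    (fsplit m).prodCongr (Equiv.refl Bool)).prodCongr (Equiv.refl Bool)

def E2 (m : ℕ) : (Fin (m+2) → Bool) ≃ ((Fin m → Bool) × Bool) × Bool :=
  (fsplit (m+1)).trans <| (fsplit m).prodCongr (Equiv.refl Bool)

def reorder (m : ℕ) : ((((Fin m → Bool) × Bool) × Bool) × Bool) ×
    ((((Fin m → Bool) × Bool) × Bool) × (((Fin m → Bool) × Bool) ×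
      ((Fin m → Bool) × SimpleGraph (Fin m)))) ≃ DD m where
  toFun x := ((x.1.1.2, x.1.1.1.2, x.2.1.2, x.2.1.1.2),
    ((x.1.1.1.1, x.2.1.1.1), (x.2.2.1.1, x.2.2.2.1)), (x.1.2, x.2.2.1.2, x.2.2.2.2))
  invFun y := ((((y.2.1.1.1, y.1.2.1), y.1.1), y.2.2.1),
    (((y.2.1.1.2, y.1.2.2.2), y.1.2.2.1), ((y.2.1.2.1, y.2.2.2.1), (y.2.1.2.2, y.2.2.2.2))))
  left_inv x := rfl
  right_inv y := rfl

noncomputable def Xi (m : ℕ) : SimpleGraph (Fin (m+4)) ≃ DD m :=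
  (Psi m).trans <| ((E1 m).prodCongr <| (E2 m).prodCongr <|
    (fsplit m).prodCongr (Equiv.refl _)).trans (reorder m)

lemma Xi_symm_apply (m : ℕ) (p q r s : Bool) (g1 g2 g3 g4 : Fin m → Bool) (xab xcd : Bool)
    (H : SimpleGraph (Fin m)) :
    (Xi m).symm ((p, q, r, s), ((g1, g2), (g3, g4)), (xab, xcd, H)) =
      (Psi m).symm (Fin.snoc (Fin.snoc (Fin.snoc g1 q) p) xab,
        Fin.snoc (Fin.snoc g2 s) r, Fin.snoc g3 xcd, g4, H) := rfl

def QQ (m : ℕ) (x : DD m) : Prop :=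
  ((x.1.1.toNat + x.1.2.1.toNat) + cnt x.2.1.1.1 =
    (x.1.2.2.1.toNat + x.1.2.2.2.toNat) + cnt x.2.1.1.2) ∧
  ((x.1.1.toNat + x.1.2.2.1.toNat) + cnt x.2.1.2.1 =
    (x.1.2.1.toNat + x.1.2.2.2.toNat) + cnt x.2.1.2.2)

lemma cond_iff (m : ℕ) (x : DD m) :
    (degN ((Xi m).symm x) (va m) = degN ((Xi m).symm x) (vb m) ∧
     degN ((Xi m).symm x) (vc m) = degN ((Xi m).symm x) (vd m)) ↔ QQ m x := by
  obtain ⟨⟨p, q, r, s⟩, ⟨⟨g1, g2⟩, ⟨g3, g4⟩⟩, ⟨xab, xcd, H⟩⟩ := x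
  rw [Xi_symm_apply, QQ]
  rw [degN_va, degN_vb, degN_vc, degN_vd]
  simp only [cnt_snoc, Fin.snoc_last, Fin.snoc_castSucc]
  constructor
  · rintro ⟨h1, h2⟩; constructor <;> omega
  · rintro ⟨h1, h2⟩; constructor <;> omega

def RR (m : ℕ) (y : (Bool × Bool × Bool × Bool) ×
    (((Fin m → Bool) × (Fin m → Bool)) × ((Fin m → Bool) × (Fin m → Bool)))) : Prop :=
  ((y.1.1.toNat + y.1.2.1.toNat) + cnt y.2.1.1 =
    (y.1.2.2.1.toNat + y.1.2.2.2.toNat) + cnt y.2.1.2) ∧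
  ((y.1.1.toNat + y.1.2.2.1.toNat) + cnt y.2.2.1 =
    (y.1.2.1.toNat + y.1.2.2.2.toNat) + cnt y.2.2.2)

/-- the 16-configuration sum -/
def Sq (m : ℕ) : ℕ :=
  ∑ p : Bool, ∑ q : Bool, ∑ r : Bool, ∑ s : Bool,
    (2*m).choose (m + (r.toNat + s.toNat) - (p.toNat + q.toNat)) *
    (2*m).choose (m + (q.toNat + s.toNat) - (p.toNat + r.toNat))

lemma card_num (m : ℕ) (hm : 2 ≤ m) :
    Nat.card {G : SimpleGraph (Fin (m+4)) //
      degN G (va m) = degN G (vb m) ∧ degN G (vc m) = degN G (vd m)} =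
    Sq m * (4 * Nat.card (SimpleGraph (Fin m))) := by
  have h1 : ∀ G : SimpleGraph (Fin (m+4)),
      (degN G (va m) = degN G (vb m) ∧ degN G (vc m) = degN G (vd m)) ↔ QQ m (Xi m G) := by
    intro G
    have := cond_iff m (Xi m G)
    rwa [Equiv.symm_apply_apply] at this
  rw [Nat.card_congr (Equiv.subtypeEquiv (Xi m) h1)]
  have h2 : ∀ x : DD m, QQ m x ↔ RR m ((Equiv.prodAssoc _ _ _).symm x).1 := fun x => Iff.rfl
  rw [Nat.card_congr (Equiv.subtypeEquiv (q := fun y => RR m y.1) (Equiv.prodAssoc _ _ _).symm h2)]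
  rw [card_prod_left (R := RR m)]
  congr 1
  · rw [card_prod_sum (W := RR m)]
    rw [Fintype.sum_prod_type]
    rw [Sq]
    refine Finset.sum_congr rfl (fun p _ => ?_)
    rw [Fintype.sum_prod_type]
    refine Finset.sum_congr rfl (fun q _ => ?_)
    rw [Fintype.sum_prod_type]
    refine Finset.sum_congr rfl (fun r _ => ?_)
    refine Finset.sum_congr rfl (fun s _ => ?_)
    have := card_and_prod
      (R1 := fun g : (Fin m → Bool) × (Fin m → Bool) =>
        (p.toNat + q.toNat) + cnt g.1 = (r.toNat + s.toNat) + cnt g.2)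
      (R2 := fun g : (Fin m → Bool) × (Fin m → Bool) =>
        (p.toNat + r.toNat) + cnt g.1 = (q.toNat + s.toNat) + cnt g.2)
    rw [show (fun b : ((Fin m → Bool) × (Fin m → Bool)) × ((Fin m → Bool) × (Fin m → Bool)) =>
      RR m ((p, q, r, s), b)) = (fun b => ((p.toNat + q.toNat) + cnt b.1.1 =
        (r.toNat + s.toNat) + cnt b.1.2) ∧ ((p.toNat + r.toNat) + cnt b.2.1 =
        (q.toNat + s.toNat) + cnt b.2.2)) from rfl]
    rw [this]
    have hp : p.toNat ≤ 1 := Bool.toNat_le p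
    have hq : q.toNat ≤ 1 := Bool.toNat_le q
    have hr : r.toNat ≤ 1 := Bool.toNat_le r
    rw [card_pairfun m _ _ (by omega), card_pairfun m _ _ (by omega)]
  · rw [Nat.card_prod, Nat.card_prod]
    have : Nat.card Bool = 2 := by rw [Nat.card_eq_fintype_card]; simp
    rw [this]
    ring

lemma card_total (m : ℕ) :
    Nat.card (SimpleGraph (Fin (m+4))) = 2^(4*m+4) * (4 * Nat.card (SimpleGraph (Fin m))) := by
  rw [Nat.card_congr (Xi m)]
  have hb : Nat.card Bool = 2 := by rw [Nat.card_eq_fintype_card]; simp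
  have hf : Nat.card (Fin m → Bool) = 2^m := by
    rw [Nat.card_eq_fintype_card, Fintype.card_fun]
    simp
  simp only [Nat.card_prod, hb, hf]
  ring

lemma exists_perm_map {α : Type*} [DecidableEq α] (l1 : List α) :
    ∀ (l2 : List α), l1.Nodup → l2.Nodup → l1.length = l2.length →
      ∃ σ : Equiv.Perm α, l1.map σ = l2 := by
  induction l1 with
  | nil =>
    intro l2 _ _ h
    rw [List.length_nil] at h
    rw [eq_comm, List.length_eq_zero_iff] at h
    exact ⟨1, by simp [h]⟩
  | cons a t1 ih =>
    intro l2 h1 h2 hlen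
    cases l2 with
    | nil => simp at hlen
    | cons b t2 =>
      rw [List.nodup_cons] at h1 h2
      obtain ⟨τ, hτ⟩ := ih t2 h1.2 h2.2 (by simpa using hlen)
      refine ⟨τ.trans (Equiv.swap (τ a) b), ?_⟩
      have hmm : List.map (⇑(τ.trans (Equiv.swap (τ a) b))) t1
          = List.map (⇑(Equiv.swap (τ a) b)) (List.map (⇑τ) t1) := by
        rw [List.map_map]
        rfl
      rw [List.map_cons, hmm, hτ]
      have hfix : ∀ x ∈ t2, Equiv.swap (τ a) b x = x := by
        intro x hx
        refine Equiv.swap_apply_of_ne_of_ne ?_ ?_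
        · rintro rfl
          rw [← hτ] at hx
          obtain ⟨y, hy, hxy⟩ := List.mem_map.1 hx
          exact h1.1 (by rwa [τ.injective hxy] at hy)
        · rintro rfl
          exact h2.1 hx
      rw [List.map_congr_left hfix]
      simp

lemma degN_comap {V W : Type*} (e : V ≃ W) (G : SimpleGraph W) (x : V) :
    degN (G.comap e) x = degN G (e x) :=
  Nat.card_congr (e.subtypeEquiv fun _ => Iff.rfl)

def gcomap {n : ℕ} (σ : Equiv.Perm (Fin n)) : SimpleGraph (Fin n) ≃ SimpleGraph (Fin n) where
  toFun G := G.comap σ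
  invFun G := G.comap σ.symm
  left_inv G := by ext x y; simp
  right_inv G := by ext x y; simp

lemma card_relabel {n : ℕ} (σ : Equiv.Perm (Fin n)) (x1 x2 x3 x4 : Fin n) :
    Nat.card {G : SimpleGraph (Fin n) //
      degN G (σ x1) = degN G (σ x2) ∧ degN G (σ x3) = degN G (σ x4)} =
    Nat.card {G : SimpleGraph (Fin n) //
      degN G x1 = degN G x2 ∧ degN G x3 = degN G x4} := by
  refine Nat.card_congr (Equiv.subtypeEquiv (gcomap σ) (fun G => ?_))
  have : ∀ z, degN ((gcomap σ) G) z = degN G (σ z) := fun z => degN_comap σ G z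
  rw [this, this, this, this]

lemma pr_formula (m : ℕ) (hm : 2 ≤ m) (x1 x2 x3 x4 : Fin (m+4))
    (h12 : x1 ≠ x2) (h13 : x1 ≠ x3) (h14 : x1 ≠ x4)
    (h23 : x2 ≠ x3) (h24 : x2 ≠ x4) (h34 : x3 ≠ x4) :
    Pr (m+4) (fun G => walkCount G 1 x1 = walkCount G 1 x2 ∧
      walkCount G 1 x3 = walkCount G 1 x4) = (Sq m : ℝ) / 2^(4*m+4) := by
  obtain ⟨σ, hσ⟩ := exists_perm_map [va m, vb m, vc m, vd m] [x1, x2, x3, x4]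
    (by
      have h1 : va m ≠ vb m := by
        apply Fin.ne_of_val_ne; simp only [va, vb, Fin.coe_castSucc, Fin.val_last]; omega
      have h2 : va m ≠ vc m := by
        apply Fin.ne_of_val_ne; simp only [va, vc, Fin.coe_castSucc, Fin.val_last]; omega
      have h3 : va m ≠ vd m := by
        apply Fin.ne_of_val_ne; simp only [va, vd, Fin.coe_castSucc, Fin.val_last]; omega
      have h4 : vb m ≠ vc m := by
        apply Fin.ne_of_val_ne; simp only [vb, vc, Fin.coe_castSucc, Fin.val_last]; omega
      have h5 : vb m ≠ vd m := by
        apply Fin.ne_of_val_ne; simp only [vb, vd, Fin.coe_castSucc, Fin.val_last]; omega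
      have h6 : vc m ≠ vd m := by
        apply Fin.ne_of_val_ne; simp only [vc, vd, Fin.coe_castSucc, Fin.val_last]; omega
      simp [h1, h2, h3, h4, h5, h6])
    (by simp [h12, h13, h14, h23, h24, h34]) rfl
  rw [List.map_cons, List.map_cons, List.map_cons, List.map_cons, List.map_nil] at hσ
  simp only [List.cons.injEq, and_true] at hσ
  obtain ⟨e1, e2, e3, e4⟩ := hσ
  rw [Pr]
  have hnum : Nat.card {G : SimpleGraph (Fin (m+4)) //
      walkCount G 1 x1 = walkCount G 1 x2 ∧ walkCount G 1 x3 = walkCount G 1 x4}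
      = Sq m * (4 * Nat.card (SimpleGraph (Fin m))) := by
    rw [Nat.card_congr (Equiv.subtypeEquivRight (fun G => by
      rw [walkCount_one G x1, walkCount_one G x2, walkCount_one G x3, walkCount_one G x4]))]
    rw [← e1, ← e2, ← e3, ← e4, card_relabel σ (va m) (vb m) (vc m) (vd m), card_num m hm]
  rw [hnum, card_total]
  have hc : ((Nat.card (SimpleGraph (Fin m)) : ℝ)) ≠ 0 := by
    have : 0 < Nat.card (SimpleGraph (Fin m)) := Nat.card_pos
    exact_mod_cast this.ne'
  push_cast
  field_simp

open Real

lemma tendsto_nat_ratio (a b : ℝ) :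
    Tendsto (fun m : ℕ => ((m:ℝ) + a) / ((m:ℝ) + b)) atTop (nhds 1) := by
  have hden : Tendsto (fun m : ℕ => (m:ℝ) + b) atTop atTop :=
    tendsto_atTop_add_const_right _ b tendsto_natCast_atTop_atTop
  have h0 : Tendsto (fun m : ℕ => (a - b) / ((m:ℝ) + b)) atTop (nhds 0) :=
    Tendsto.div_atTop tendsto_const_nhds hden
  have h1 : Tendsto (fun m : ℕ => 1 + (a - b) / ((m:ℝ) + b)) atTop (nhds 1) := by
    simpa using tendsto_const_nhds.add h0
  refine h1.congr' ?_
  filter_upwards [hden.eventually_gt_atTop 0] with m hmb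
  field_simp
  ring

lemma stirling_pos (k : ℕ) (hk : k ≠ 0) : 0 < Stirling.stirlingSeq k := by
  obtain ⟨j, rfl⟩ := Nat.exists_eq_succ_of_ne_zero hk
  exact Stirling.stirlingSeq'_pos j

lemma central_identity (m : ℕ) (hm : 1 ≤ m) :
    Real.sqrt (π * m) * ((2*m).choose m : ℝ) / 4^m
      = Real.sqrt π * Stirling.stirlingSeq (2*m) / (Stirling.stirlingSeq m)^2 := by
  have hm0 : (0:ℝ) < m := by exact_mod_cast hm
  have hfact : ((2*m).factorial : ℝ) = ((2*m).choose m : ℝ) * m.factorial * m.factorial := by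
    have h := Nat.choose_mul_factorial_mul_factorial (show m ≤ 2*m by omega)
    have h2 : 2*m - m = m := by omega
    rw [h2] at h
    exact_mod_cast h.symm
  have hsqpi : Real.sqrt (π * m) = Real.sqrt π * Real.sqrt m := Real.sqrt_mul pi_pos.le _
  rw [Stirling.stirlingSeq, Stirling.stirlingSeq]
  have hc2 : ((2*m : ℕ) : ℝ) = 2 * (m:ℝ) := by push_cast; ring
  rw [hc2]
  have hP2 : ((2*(m:ℝ))/Real.exp 1) ^ (2*m) = 4^m * (((m:ℝ)/Real.exp 1)^(2*m)) := by
    rw [show (2*(m:ℝ))/Real.exp 1 = 2 * ((m:ℝ)/Real.exp 1) by ring, mul_pow, pow_mul]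
    norm_num
  have hS2 : Real.sqrt (2*(2*(m:ℝ))) = 2 * Real.sqrt m := by
    rw [show (2:ℝ)*(2*(m:ℝ)) = 4 * m by ring, Real.sqrt_mul (by norm_num),
      show (4:ℝ) = 2^2 by norm_num, Real.sqrt_sq (by norm_num)]
  rw [hP2, hS2, hfact]
  have hsm : Real.sqrt (m:ℝ) ≠ 0 := by positivity
  have hs2m : Real.sqrt (2*(m:ℝ)) ≠ 0 := by positivity
  have hfm : (m.factorial : ℝ) ≠ 0 := by exact_mod_cast m.factorial_ne_zero
  have hme : ((m:ℝ)/Real.exp 1) ≠ 0 := by positivity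
  have hme2 : ((m:ℝ)/Real.exp 1)^(2*m) ≠ 0 := pow_ne_zero _ hme
  have hmepow : ((m:ℝ)/Real.exp 1)^m ≠ 0 := pow_ne_zero _ hme
  have h4 : ((4:ℝ))^m ≠ 0 := by positivity
  have hsq : Real.sqrt (2*(m:ℝ)) ^ 2 = 2 * m := Real.sq_sqrt (by positivity)
  have hp1 : (((m:ℝ)/Real.exp 1)^m)^2 = ((m:ℝ)/Real.exp 1)^(2*m) := by
    rw [← pow_mul, mul_comm]
  have hms : (m:ℝ) / Real.sqrt m = Real.sqrt m := Real.div_sqrt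
  rw [hsqpi, ← hp1]
  field_simp
  have h2sq : (Real.sqrt 2)^2 = 2 := Real.sq_sqrt (by norm_num)
  rw [hsq, Real.sq_sqrt hm0.le]
  ring

lemma tendsto_center :
    Tendsto (fun m : ℕ => Real.sqrt (π * m) * ((2*m).choose m : ℝ) / 4^m) atTop (nhds 1) := by
  have h2m : Tendsto (fun m : ℕ => 2*m) atTop atTop :=
    tendsto_atTop_mono (fun m => Nat.le_mul_of_pos_left m (by norm_num)) tendsto_id
  have hs2 : Tendsto (fun m : ℕ => Stirling.stirlingSeq (2*m)) atTop (nhds (Real.sqrt π)) :=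
    Stirling.tendsto_stirlingSeq_sqrt_pi.comp h2m
  have hs1 : Tendsto (fun m : ℕ => (Stirling.stirlingSeq m)^2) atTop (nhds ((Real.sqrt π)^2)) :=
    (Stirling.tendsto_stirlingSeq_sqrt_pi.comp tendsto_id).pow 2
  have hval : Real.sqrt π * Real.sqrt π / (Real.sqrt π)^2 = 1 := by
    rw [Real.sq_sqrt pi_pos.le, Real.mul_self_sqrt pi_pos.le]
    exact div_self (ne_of_gt pi_pos)
  have h : Tendsto (fun m : ℕ => Real.sqrt π * Stirling.stirlingSeq (2*m) /
      (Stirling.stirlingSeq m)^2) atTop (nhds (Real.sqrt π * Real.sqrt π / (Real.sqrt π)^2)) :=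
    (tendsto_const_nhds.mul hs2).div hs1 (by
      rw [Real.sq_sqrt pi_pos.le]; exact ne_of_gt pi_pos)
  rw [hval] at h
  refine h.congr' ?_
  filter_upwards [eventually_ge_atTop 1] with m hm
  exact (central_identity m hm).symm

lemma tendsto_up (δ : ℕ) :
    Tendsto (fun m : ℕ => Real.sqrt (π * m) * ((2*m).choose (m + δ) : ℝ) / 4^m)
      atTop (nhds 1) := by
  induction δ with
  | zero => simpa using tendsto_center
  | succ δ ih =>
    have hratio := tendsto_nat_ratio (-(δ:ℝ)) ((δ:ℝ)+1)
    have h := ih.mul hratio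
    rw [mul_one] at h
    refine h.congr' ?_
    filter_upwards [eventually_ge_atTop (δ+1)] with m hm
    have hkey := Nat.choose_succ_right_eq (2*m) (m + δ)
    have h2 : 2*m - (m + δ) = m - δ := by omega
    rw [h2] at hkey
    have hcast : (((2*m).choose (m + δ + 1)) : ℝ) * ((m:ℝ) + δ + 1)
        = ((2*m).choose (m + δ) : ℝ) * ((m:ℝ) - δ) := by
      have := congrArg (fun t : ℕ => (t : ℝ)) hkey
      push_cast at this
      rw [Nat.cast_sub (by omega : δ ≤ m)] at this
      push_cast at this
      convert this using 2 <;> push_cast <;> ring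
    have hden : ((m:ℝ) + δ + 1) ≠ 0 := by positivity
    have : ((2*m).choose (m + (δ+1)) : ℝ)
        = ((2*m).choose (m + δ) : ℝ) * (((m:ℝ) - δ) / ((m:ℝ) + δ + 1)) := by
      rw [show m + (δ+1) = m + δ + 1 from rfl]
      field_simp
      linarith [hcast]
    rw [this]
    have : ((m:ℝ) + -(δ:ℝ)) / ((m:ℝ) + ((δ:ℝ)+1)) = ((m:ℝ) - δ) / ((m:ℝ) + δ + 1) := by
      ring_nf
    rw [this]
    ring

lemma tendsto_down (δ : ℕ) :
    Tendsto (fun m : ℕ => Real.sqrt (π * m) * ((2*m).choose (m - δ) : ℝ) / 4^m)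
      atTop (nhds 1) := by
  refine (tendsto_up δ).congr' ?_
  filter_upwards [eventually_ge_atTop δ] with m hm
  have h : (2*m).choose (m - δ) = (2*m).choose (m + δ) := by
    have := Nat.choose_symm (show m + δ ≤ 2*m by omega)
    rwa [show 2*m - (m+δ) = m - δ by omega] at this
  rw [h]

lemma tendsto_master (u v : ℕ) (hu : u ≤ 2) (hv : v ≤ 2) :
    Tendsto (fun m : ℕ => Real.sqrt (π * m) * ((2*m).choose (m + v - u) : ℝ) / 4^m)
      atTop (nhds 1) := by
  interval_cases u <;> interval_cases v
  · simpa using tendsto_center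
  · refine (tendsto_up 1).congr (fun m => ?_); rw [show m + 1 - 0 = m + 1 by omega]
  · refine (tendsto_up 2).congr (fun m => ?_); rw [show m + 2 - 0 = m + 2 by omega]
  · refine (tendsto_down 1).congr (fun m => ?_); rw [show m - 1 = m + 0 - 1 by omega]
  · refine tendsto_center.congr (fun m => ?_); rw [show m + 1 - 1 = m by omega]
  · refine (tendsto_up 1).congr (fun m => ?_); rw [show m + 1 = m + 2 - 1 by omega]
  · refine (tendsto_down 2).congr (fun m => ?_); rw [show m - 2 = m + 0 - 2 by omega]
  · refine (tendsto_down 1).congr (fun m => ?_); rw [show m - 1 = m + 1 - 2 by omega]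
  · refine tendsto_center.congr (fun m => ?_); rw [show m + 2 - 2 = m by omega]

lemma term_tendsto (u1 v1 u2 v2 : ℕ) (hu1 : u1 ≤ 2) (hv1 : v1 ≤ 2) (hu2 : u2 ≤ 2)
    (hv2 : v2 ≤ 2) :
    Tendsto (fun m : ℕ => π * ((m:ℝ) + 4) *
        (((2*m).choose (m + v1 - u1) : ℝ) * ((2*m).choose (m + v2 - u2) : ℝ)) / 2^(4*m+4))
      atTop (nhds (1/16)) := by
  have W1 := tendsto_master u1 v1 hu1 hv1
  have W2 := tendsto_master u2 v2 hu2 hv2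
  have hr : Tendsto (fun m : ℕ => ((m:ℝ) + 4) / (m:ℝ)) atTop (nhds 1) := by
    have := tendsto_nat_ratio 4 0
    simpa using this
  have h : Tendsto (fun m : ℕ => (1/16 : ℝ) * ((((m:ℝ) + 4) / (m:ℝ)) *
      ((Real.sqrt (π * m) * ((2*m).choose (m + v1 - u1) : ℝ) / 4^m) *
       (Real.sqrt (π * m) * ((2*m).choose (m + v2 - u2) : ℝ) / 4^m))))
      atTop (nhds ((1/16) * (1 * (1 * 1)))) :=
    tendsto_const_nhds.mul (hr.mul (W1.mul W2))
  rw [show ((1:ℝ)/16) * (1 * (1 * 1)) = 1/16 by norm_num] at h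
  refine h.congr' ?_
  filter_upwards [eventually_ge_atTop 1] with m hm
  have hm0 : (0:ℝ) < m := by exact_mod_cast hm
  have hss : Real.sqrt (π * m) * Real.sqrt (π * m) = π * m :=
    Real.mul_self_sqrt (by positivity)
  have hpow : (2:ℝ)^(4*m+4) = 16 * ((4:ℝ)^m * 4^m) := by
    have h4 : (4:ℝ)^m = 2^(2*m) := by rw [show (4:ℝ) = 2^2 by norm_num, ← pow_mul]
    rw [h4, ← pow_add, show 4*m+4 = 2*m + 2*m + 4 by ring, pow_add, pow_add]
    norm_num
    ring
  rw [hpow]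
  have h4m : ((4:ℝ))^m ≠ 0 := by positivity
  have hnum : (Real.sqrt (π * ↑m) * ((2*m).choose (m + v1 - u1) : ℝ) / 4^m) *
      (Real.sqrt (π * ↑m) * ((2*m).choose (m + v2 - u2) : ℝ) / 4^m)
      = (π * m) * (((2*m).choose (m + v1 - u1) : ℝ) *
        ((2*m).choose (m + v2 - u2) : ℝ)) / (4^m * 4^m) := by
    rw [div_mul_div_comm, mul_mul_mul_comm, hss]
  rw [hnum]
  field_simp


lemma main_tendsto :
    Filter.Tendsto (fun m : ℕ => π * ((m:ℝ) + 4) * (Sq m : ℝ) / 2^(4*m+4)) Filter.atTop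
      (nhds 1) := by
  classical
  have hterm : ∀ x : Bool × Bool × Bool × Bool,
      Filter.Tendsto (fun m : ℕ => π * ((m:ℝ) + 4) *
        (((2*m).choose (m + (x.2.2.1.toNat + x.2.2.2.toNat) - (x.1.toNat + x.2.1.toNat)) : ℝ) *
         ((2*m).choose (m + (x.2.1.toNat + x.2.2.2.toNat) - (x.1.toNat + x.2.2.1.toNat)) : ℝ)) /
        2^(4*m+4)) Filter.atTop (nhds (1/16)) := by
    intro x
    have b1 := Bool.toNat_le x.1
    have b2 := Bool.toNat_le x.2.1
    have b3 := Bool.toNat_le x.2.2.1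
    have b4 := Bool.toNat_le x.2.2.2
    exact term_tendsto _ _ _ _ (by omega) (by omega) (by omega) (by omega)
  have hsum := tendsto_finset_sum (Finset.univ : Finset (Bool × Bool × Bool × Bool))
    (fun x _ => hterm x)
  have hval : ∑ _x : Bool × Bool × Bool × Bool, (1/16 : ℝ) = 1 := by
    rw [Finset.sum_const, Finset.card_univ]
    norm_num
  rw [hval] at hsum
  refine hsum.congr (fun m => ?_)
  rw [Sq]
  push_cast
  rw [Fintype.sum_prod_type]
  simp only [Fintype.sum_prod_type, Finset.mul_sum, Finset.sum_div]

end ProbAux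

/-- For four fixed pairwise distinct vertices `i, j, i', j'`, the probability that in a
uniformly random graph on `n` vertices both `w₁(i) = w₁(j)` and `w₁(i') = w₁(j')` hold is
`(1 + o(1))/(π n)`: `π n · P(w₁(i) = w₁(j) ∧ w₁(i') = w₁(j')) → 1` as `n → ∞`. -/
theorem prob_two_disjoint_equal_degrees (i j i' j' : ℕ)
    (h1 : i ≠ j) (h2 : i ≠ i') (h3 : i ≠ j') (h4 : j ≠ i') (h5 : j ≠ j') (h6 : i' ≠ j') :
    Tendsto (fun n : ℕ =>
      if h : i < n ∧ j < n ∧ i' < n ∧ j' < n then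
        Real.pi * (n : ℝ) * Pr n (fun G =>
          walkCount G 1 ⟨i, h.1⟩ = walkCount G 1 ⟨j, h.2.1⟩ ∧
          walkCount G 1 ⟨i', h.2.2.1⟩ = walkCount G 1 ⟨j', h.2.2.2⟩)
      else 0)
      atTop (nhds 1) := by
  have hcomp : Tendsto (fun n : ℕ =>
      Real.pi * (((n - 4 : ℕ) : ℝ) + 4) * (ProbAux.Sq (n - 4) : ℝ) / 2^(4*(n-4)+4)) atTop
      (nhds 1) :=
    ProbAux.main_tendsto.comp (tendsto_sub_atTop_nat 4)
  refine hcomp.congr' ?_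
  filter_upwards [eventually_ge_atTop (i + j + i' + j' + 7)] with n hn
  obtain ⟨m, rfl⟩ : ∃ m, n = m + 4 := ⟨n - 4, by omega⟩
  have hcond : i < m + 4 ∧ j < m + 4 ∧ i' < m + 4 ∧ j' < m + 4 := by omega
  rw [dif_pos hcond]
  have hm2 : 2 ≤ m := by omega
  rw [ProbAux.pr_formula m hm2 ⟨i, hcond.1⟩ ⟨j, hcond.2.1⟩ ⟨i', hcond.2.2.1⟩ ⟨j', hcond.2.2.2⟩
    (Fin.ne_of_val_ne h1) (Fin.ne_of_val_ne h2) (Fin.ne_of_val_ne h3)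
    (Fin.ne_of_val_ne h4) (Fin.ne_of_val_ne h5) (Fin.ne_of_val_ne h6)]
  rw [show m + 4 - 4 = m by omega]
  push_cast
  ring
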